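/- Let V be a real vector space, Δ ⊆ V a finite linearly independent subset, λ ∈ V, 𝔸 a nonzero additive subgroup of (ℝ,+), and X ⊆ λ − ℤ₊Δ a subset such that λ − nα ∈ X for every α ∈ Δ and every integer n ≥ 0. Then every nonempty weak 𝔸-face Y of X contains λ. -/

import Mathlib

open Finsupp

/-- `R₊ := R ∩ [0,∞)`. -/
def Rplus (R : Set ℝ) : Set ℝ := R ∩ Set.Ici 0

/-- `ℓ(f) := Σ_v f(v)`. -/
noncomputable def ell {V : Type*} [AddCommGroup V] [Module ℝ V] (f : V →₀ ℝ) : ℝ :=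
  f.sum fun _ r => r

/-- `ℓ⃗(f) := Σ_v f(v) • v`. -/
noncomputable def vell {V : Type*} [AddCommGroup V] [Module ℝ V] (f : V →₀ ℝ) : V :=
  f.sum fun v r => r • v

/-- `f ∈ Fin(X,R)`: finitely supported, support in `X`, values in `R ∪ {0}`. -/
def IsFinSupp {V : Type*} [AddCommGroup V] [Module ℝ V] (X : Set V) (R : Set ℝ)
    (f : V →₀ ℝ) : Prop :=
  ↑f.support ⊆ X ∧ ∀ v, f v ∈ R ∪ {0}

/-- `Y` is a weak `R`-face of `X`. -/
def IsWeakFace {V : Type*} [AddCommGroup V] [Module ℝ V] (X Y : Set V) (R : Set ℝ) : Prop :=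
  ∀ f g : V →₀ ℝ, IsFinSupp X (Rplus R) f → IsFinSupp Y (Rplus R) g →
    ell f = ell g → 0 < ell g → vell f = vell g → ↑f.support ⊆ Y

/-- `Y` is a positive weak `R`-face of `X`. -/
def IsPosWeakFace {V : Type*} [AddCommGroup V] [Module ℝ V] (X Y : Set V) (R : Set ℝ) : Prop :=
  ∀ f g : V →₀ ℝ, IsFinSupp X (Rplus R) f → IsFinSupp Y (Rplus R) g →
    vell f = vell g → ell g ≤ ell f ∧ (ell g = ell f ↔ ↑f.support ⊆ Y)

/-- `Y` is `(R',R)`-closed in `X`. -/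
def IsRClosed {V : Type*} [AddCommGroup V] [Module ℝ V] (X Y : Set V) (R' R : Set ℝ) : Prop :=
  ∀ f g : V →₀ ℝ, IsFinSupp X R f → IsFinSupp Y R g →
    ell f = ell g → ell f ∈ R' → ell f ≠ 0 → vell f = vell g → ↑f.support ⊆ Y

/-- The maximizer set `X(φ)`. -/
def maximizer {V : Type*} [AddCommGroup V] [Module ℝ V] (X : Set V) (φ : V →ₗ[ℝ] ℝ) : Set V :=
  {x | x ∈ X ∧ ∀ x' ∈ X, φ x' ≤ φ x}

lemma nsmul_helper {V : Type*} [AddCommGroup V] (k : ℕ) (u z : V) :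
    u + (k • u - z) = (k + 1) • u - z := by
  rw [succ_nsmul]; abel

lemma mem_closure_rep {V : Type*} [AddCommGroup V] [Module ℝ V] (Δ : Set V) {q : V}
    (hq : q ∈ AddSubmonoid.closure Δ) :
    ∃ c : V →₀ ℕ, ↑c.support ⊆ Δ ∧ q = c.sum fun v n => n • v := by
  classical
  induction hq using AddSubmonoid.closure_induction with
  | mem x hx =>
      refine ⟨Finsupp.single x 1, ?_, by simp⟩
      intro v hv
      simp only [Finset.mem_coe, Finsupp.mem_support_iff, Finsupp.single_apply] at hv
      rcases eq_or_ne x v with rfl | h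
      · exact hx
      · simp [h] at hv
  | zero => exact ⟨0, by simp, by simp⟩
  | add x y _ _ hx hy =>
      obtain ⟨c₁, hc₁, rfl⟩ := hx
      obtain ⟨c₂, hc₂, rfl⟩ := hy
      refine ⟨c₁ + c₂, ?_, ?_⟩
      · exact subset_trans (Finset.coe_subset.mpr Finsupp.support_add)
          (by rw [Finset.coe_union]; exact Set.union_subset hc₁ hc₂)
      · rw [Finsupp.sum_add_index'] <;> simp [add_smul]


/-- If `X ⊆ λ − ℤ₊Δ` contains `λ − nα` for every `α ∈ Δ` and `n ≥ 0`,
then every nonempty weak `𝔸`-face `Y` of `X` contains `λ`. -/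
theorem statement16 {V : Type*} [AddCommGroup V] [Module ℝ V]
    (𝔸 : AddSubgroup ℝ) (h𝔸 : 𝔸 ≠ ⊥)
    (Δ : Set V) (hfin : Δ.Finite)
    (hind : LinearIndependent ℝ (fun x : Δ => (x : V)))
    (lam : V) (X : Set V)
    (hX : X ⊆ {x : V | ∃ q ∈ AddSubmonoid.closure Δ, x = lam - q})
    (hstring : ∀ α ∈ Δ, ∀ n : ℕ, lam - n • α ∈ X)
    (Y : Set V) (hYX : Y ⊆ X) (hne : Y.Nonempty)
    (hface : IsWeakFace X Y (𝔸 : Set ℝ)) :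
    lam ∈ Y := by
  classical
  -- a positive element of 𝔸
  obtain ⟨x, hx𝔸, hx0⟩ : ∃ x ∈ 𝔸, x ≠ 0 := by
    by_contra h
    push_neg at h
    exact h𝔸 ((AddSubgroup.eq_bot_iff_forall _).mpr h)
  obtain ⟨a, ha𝔸, ha⟩ : ∃ a ∈ 𝔸, (0:ℝ) < a := by
    rcases lt_or_gt_of_ne hx0 with h | h
    · exact ⟨-x, 𝔸.neg_mem hx𝔸, by linarith⟩
    · exact ⟨x, hx𝔸, h⟩
  -- decompose the point of Y
  obtain ⟨y, hy⟩ := hne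
  obtain ⟨q, hq, hyq⟩ := hX (hYX hy)
  obtain ⟨c, hcΔ, rfl⟩ := mem_closure_rep Δ hq
  by_cases hc : c = 0
  · subst hc
    simp only [Finsupp.sum_zero_index, sub_zero] at hyq
    exact hyq ▸ hy
  have hcs : c.support.Nonempty := Finsupp.support_nonempty_iff.mpr hc
  -- consequences of linear independence
  have hne0 : ∀ v ∈ Δ, v ≠ (0:V) := fun v hv => hind.ne_zero ⟨v, hv⟩
  have hinj : ∀ v ∈ Δ, ∀ w ∈ Δ, ∀ m n : ℝ, m ≠ 0 → m • v = n • w → v = w := by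
    intro v hv w hw m n hm hmn
    by_contra hvw
    have hsub : (Finsupp.single (⟨v, hv⟩ : Δ) m - Finsupp.single ⟨w, hw⟩ n) = 0 := by
      refine linearIndependent_iff.mp hind _ ?_
      rw [map_sub, Finsupp.linearCombination_single, Finsupp.linearCombination_single]
      simpa using sub_eq_zero_of_eq hmn
    have := DFunLike.congr_fun hsub ⟨v, hv⟩
    rw [Finsupp.sub_apply, Finsupp.single_eq_same,
      Finsupp.single_eq_of_ne' (fun h => hvw (congrArg Subtype.val h).symm),
      Finsupp.zero_apply, sub_zero] at this
    exact hm this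
  set k := c.support.card with hk
  set M := k + 1 with hM
  set φ : V → V := fun v => lam - (M * c v) • v with hφ
  have hφmem : ∀ v ∈ c.support, φ v ∈ X := fun v hv => hstring v (hcΔ hv) (M * c v)
  have hMc : ∀ v ∈ c.support, (M * c v) ≠ 0 := by
    intro v hv
    simp only [Finsupp.mem_support_iff] at hv
    positivity
  have hφne : ∀ v ∈ c.support, φ v ≠ lam := by
    intro v hv h
    have h' : lam - (M * c v) • v = lam := h
    have h2 : (M * c v) • v = 0 := sub_eq_self.mp h'
    have h3 : ((M * c v : ℕ) : ℝ) • v = 0 := by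
      rw [Nat.cast_smul_eq_nsmul]; exact h2
    rcases smul_eq_zero.mp h3 with h4 | h4
    · exact hMc v hv (by exact_mod_cast h4)
    · exact hne0 v (hcΔ hv) h4
  have hφinj : Set.InjOn φ c.support := by
    intro v hv w hw h
    have h' : lam - (M * c v) • v = lam - (M * c w) • w := h
    have h2 : (M * c v) • v = (M * c w) • w := sub_right_injective h'
    have h3 : ((M * c v : ℕ) : ℝ) • v = ((M * c w : ℕ) : ℝ) • w := by
      rw [Nat.cast_smul_eq_nsmul, Nat.cast_smul_eq_nsmul]; exact h2
    exact hinj v (hcΔ hv) w (hcΔ hw) _ _ (by exact_mod_cast hMc v hv) h3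
  set S : Finset V := insert lam (c.support.image φ) with hS
  have hlamim : lam ∉ c.support.image φ := by
    intro hlam
    obtain ⟨v, hv, h⟩ := Finset.mem_image.mp hlam
    exact hφne v hv h
  have hcard : S.card = M := by
    rw [hS, Finset.card_insert_of_notMem hlamim, Finset.card_image_of_injOn hφinj]
  set f : V →₀ ℝ := Finsupp.indicator S (fun _ _ => a) with hf
  have hfapp : ∀ w ∈ S, f w = a := fun w hw => Finsupp.indicator_of_mem hw _
  have hfsupp : f.support = S := by
    ext w
    simp only [Finsupp.mem_support_iff]
    constructor
    · intro h
      by_contra hw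
      exact h (Finsupp.indicator_of_notMem hw _)
    · intro hw
      rw [hfapp w hw]; exact ne_of_gt ha
  set g : V →₀ ℝ := Finsupp.single (lam - c.sum fun v n => n • v) ((M : ℝ) * a) with hg
  have hMpos : 0 < M := Nat.succ_pos k
  have hMa : (0:ℝ) < (M:ℝ) * a := mul_pos (by exact_mod_cast hMpos) ha
  have hellg : ell g = (M : ℝ) * a := by
    rw [hg, ell, Finsupp.sum_single_index rfl]
  have hellf : ell f = (M : ℝ) * a := by
    rw [ell, Finsupp.sum, hfsupp, Finset.sum_congr rfl hfapp, Finset.sum_const, hcard,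
      nsmul_eq_mul]
  -- the key vector computation
  have hsumS : ∑ w ∈ S, w = M • (lam - c.sum fun v n => n • v) := by
    rw [hS, Finset.sum_insert hlamim, Finset.sum_image hφinj]
    rw [Finsupp.sum]
    have : ∑ v ∈ c.support, φ v = k • lam - ∑ v ∈ c.support, (M * c v) • v := by
      rw [hφ]
      simp only [Finset.sum_sub_distrib, Finset.sum_const, hk]
    rw [this]
    have h2 : ∑ v ∈ c.support, (M * c v) • v = M • ∑ v ∈ c.support, (c v) • v := by
      rw [Finset.smul_sum]
      exact Finset.sum_congr rfl fun v _ => mul_smul M (c v) v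
    rw [h2, smul_sub]
    rw [nsmul_helper k lam (M • ∑ v ∈ c.support, c v • v), hM]
  have hvellf : vell f = vell g := by
    rw [vell, vell, Finsupp.sum, hfsupp, hg, Finsupp.sum_single_index]
    rotate_left
    · exact zero_smul ℝ _
    calc ∑ w ∈ S, f w • w = ∑ w ∈ S, a • w :=
          Finset.sum_congr rfl fun w hw => by rw [hfapp w hw]
      _ = a • ∑ w ∈ S, w := (Finset.smul_sum).symm
      _ = a • (M • (lam - c.sum fun v n => n • v)) := by rw [hsumS]
      _ = ((M:ℝ) * a) • (lam - c.sum fun v n => n • v) := by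
          rw [← Nat.cast_smul_eq_nsmul ℝ, smul_smul, mul_comm]
  -- memberships
  have haRp : a ∈ Rplus 𝔸 := ⟨ha𝔸, le_of_lt ha⟩
  have hfX : IsFinSupp X (Rplus ↑𝔸) f := by
    constructor
    · rw [hfsupp, hS]
      intro w hw
      simp only [Finset.coe_insert, Set.mem_insert_iff, Finset.coe_image, Set.mem_image,
        Finset.mem_coe] at hw
      rcases hw with rfl | ⟨v, hv, rfl⟩
      · obtain ⟨α, hα⟩ := hcs
        have := hstring α (hcΔ hα) 0
        simpa using this
      · exact hφmem v hv
    · intro v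
      by_cases hv : v ∈ S
      · rw [hfapp v hv]; exact Or.inl haRp
      · rw [Finsupp.indicator_of_notMem hv]; exact Or.inr rfl
  have hgY : IsFinSupp Y (Rplus ↑𝔸) g := by
    constructor
    · refine subset_trans (Finset.coe_subset.mpr Finsupp.support_single_subset) ?_
      simp only [Finset.coe_singleton, Set.singleton_subset_iff]
      rw [← hyq]; exact hy
    · intro v
      rw [hg, Finsupp.single_apply]
      split
      · exact Or.inl ⟨by
          have : (M:ℝ) * a = M • a := by rw [nsmul_eq_mul]
          rw [this]; exact AddSubgroup.nsmul_mem 𝔸 ha𝔸 M, le_of_lt hMa⟩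
      · exact Or.inr rfl
  have hsub := hface f g hfX hgY (by rw [hellf, hellg]) (by rw [hellg]; exact hMa) hvellf
  apply hsub
  rw [hfsupp]
  exact Finset.mem_insert_self _ _
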